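/- Let A be an n×n nonnegative matrix, α > 0 with α·ρ(A) < 1, and v = (I - αA)^{-1}𝟙. For a positive vector v̄ ∈ ℝ^n, one has v < v̄ entrywise if and only if there exists a positive vector λ ∈ ℝ^n satisfying 𝟙 + αAλ < λ and λ < v̄ (all inequalities entrywise). -/

import Mathlib

open Matrix Filter Topology
open scoped NNReal ENNReal

attribute [local instance] Matrix.linftyOpNormedRing Matrix.linftyOpNormedAlgebra
  Matrix.linftyOpNormedSpace

noncomputable def specRad {m : Type*} [Fintype m] [DecidableEq m]
    (A : Matrix m m ℝ) : ℝ :=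
  (spectralRadius ℂ (A.map (algebraMap ℝ ℂ))).toReal

section aux

variable {n : ℕ}

private lemma entry_le_norm (C : Matrix (Fin n) (Fin n) ℂ) (i j : Fin n) : ‖C i j‖ ≤ ‖C‖ := by
  have h1 : ‖C i j‖₊ ≤ ‖C‖₊ := by
    rw [Matrix.linfty_opNNNorm_def]
    exact le_trans (Finset.single_le_sum (f := fun k => ‖C i k‖₊) (fun k _ => zero_le) (Finset.mem_univ j))
      (Finset.le_sup (f := fun r => ∑ s, ‖C r s‖₊) (Finset.mem_univ i))
  exact_mod_cast h1

end aux

/-- LP characterization (static case): $v<\bar v$ iff there is a positive $\lambda$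
with $\mathbf 1+\alpha A\lambda<\lambda$ and $\lambda<\bar v$. -/
theorem stmt6 {n : ℕ} (A : Matrix (Fin n) (Fin n) ℝ) (α : ℝ)
    (hA : ∀ i j, 0 ≤ A i j) (hα : 0 < α) (h : α * specRad A < 1)
    (vbar : Fin n → ℝ) (hvbar : ∀ i, 0 < vbar i) :
    (∀ i, ((1 - α • A)⁻¹ *ᵥ (1 : Fin n → ℝ)) i < vbar i) ↔
      ∃ lam : Fin n → ℝ, (∀ i, 0 < lam i) ∧
        (∀ i, 1 + α * (A *ᵥ lam) i < lam i) ∧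
        (∀ i, lam i < vbar i) := by
  rcases Nat.eq_zero_or_pos n with hn | hn
  · subst hn
    constructor
    · intro _
      exact ⟨fun i => i.elim0, fun i => i.elim0, fun i => i.elim0, fun i => i.elim0⟩
    · intro _ i
      exact i.elim0
  haveI : NeZero n := ⟨hn.ne'⟩
  set A' : Matrix (Fin n) (Fin n) ℂ := A.map (algebraMap ℝ ℂ) with hA'
  set ρ := spectralRadius ℂ A' with hρ
  have hρtop : ρ ≠ ⊤ := ((spectrum.spectralRadius_le_nnnorm (𝕜 := ℂ) A').trans_lt ENNReal.coe_lt_top).ne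
  have hαρ : α * ρ.toReal < 1 := h
  -- invertibility over ℂ
  have hz : (‖(α : ℂ)‖₊ : ℝ≥0∞) < ρ⁻¹ := by
    rw [ENNReal.lt_inv_iff_lt_inv]
    have hcoe : (‖(α : ℂ)‖₊ : ℝ≥0∞) = ENNReal.ofReal α := by
      rw [← enorm_eq_nnnorm, ← ofReal_norm, Complex.norm_real, Real.norm_eq_abs,
        abs_of_pos hα]
    rw [hcoe, ← ENNReal.ofReal_inv_of_pos hα, ENNReal.lt_ofReal_iff_toReal_lt hρtop]
    have : ρ.toReal < 1 / α := (lt_div_iff₀ hα).mpr (by rwa [mul_comm])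
    simpa [one_div] using this
  have hUnitC : IsUnit (1 - (α : ℂ) • A') :=
    spectrum.isUnit_one_sub_smul_of_lt_inv_radius hz
  have hsm : (algebraMap ℝ ℂ).mapMatrix (α • A) = (α : ℂ) • A' := by
    ext i j
    simp only [RingHom.mapMatrix_apply, Matrix.map_apply, Matrix.smul_apply, smul_eq_mul,
      _root_.map_mul, Complex.coe_algebraMap, Complex.ofReal_mul]
    rfl
  have hmap : (algebraMap ℝ ℂ).mapMatrix (1 - α • A) = 1 - (α : ℂ) • A' := by
    rw [map_sub, _root_.map_one, hsm]
  have hdet : IsUnit (1 - α • A).det := by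
    rw [Matrix.isUnit_iff_isUnit_det, ← hmap, ← RingHom.map_det] at hUnitC
    rw [isUnit_iff_ne_zero] at hUnitC ⊢
    intro hcontra
    exact hUnitC (by rw [hcontra, map_zero])
  set M := (1 - α • A)⁻¹ with hM
  have hMl : M * (1 - α • A) = 1 := Matrix.nonsing_inv_mul _ hdet
  have hMr : (1 - α • A) * M = 1 := Matrix.mul_nonsing_inv _ hdet
  -- geometric sum identity
  have key : ∀ N : ℕ, M = (∑ k ∈ Finset.range N, (α • A) ^ k) + M * (α • A) ^ N := by
    intro N
    have h2 : (1 - α • A) * (∑ k ∈ Finset.range N, (α • A) ^ k) = 1 - (α • A) ^ N := by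
      rw [← neg_sub (α • A) 1, neg_mul, mul_geom_sum, neg_sub]
    calc M = M * 1 := (mul_one M).symm
      _ = M * ((1 - α • A) * (∑ k ∈ Finset.range N, (α • A) ^ k) + (α • A) ^ N) := by
          rw [h2, sub_add_cancel]
      _ = _ := by rw [mul_add, ← mul_assoc, hMl, one_mul]
  -- powers tend to zero entrywise
  have hgel := spectrum.pow_norm_pow_one_div_tendsto_nhds_spectralRadius A'
  have hg' : Tendsto (fun N : ℕ => ‖A' ^ N‖ ^ (1 / (N : ℝ))) atTop (𝓝 ρ.toReal) := by
    have := (ENNReal.tendsto_toReal hρtop).comp hgel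
    simpa [Function.comp_def, ENNReal.toReal_ofReal (Real.rpow_nonneg (norm_nonneg _) _)]
      using this
  set c : ℝ := (1 + α * ρ.toReal) / 2 with hc
  have hρ0 : 0 ≤ ρ.toReal := ENNReal.toReal_nonneg
  have hc0 : 0 < c := by positivity
  have hc1 : c < 1 := by rw [hc]; linarith
  have hαρc : α * ρ.toReal < c := by rw [hc]; linarith
  have hev : ∀ᶠ N : ℕ in atTop, α * ‖A' ^ N‖ ^ (1 / (N : ℝ)) < c :=
    (hg'.const_mul α).eventually_lt_const hαρc
  have hnormB : Tendsto (fun N : ℕ => ‖((α : ℂ) • A') ^ N‖) atTop (𝓝 0) := by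
    apply squeeze_zero' (Eventually.of_forall fun N => norm_nonneg _) ?_
      (tendsto_pow_atTop_nhds_zero_of_lt_one hc0.le hc1)
    filter_upwards [hev, eventually_ge_atTop 1] with N hN hN1
    have hN0 : (N : ℝ) ≠ 0 := by positivity
    have ht : ‖A' ^ N‖ = (‖A' ^ N‖ ^ (1 / (N : ℝ))) ^ N := by
      rw [← Real.rpow_natCast (‖A' ^ N‖ ^ (1 / (N : ℝ))) N, ← Real.rpow_mul (norm_nonneg _),
        one_div_mul_cancel hN0, Real.rpow_one]
    calc ‖((α : ℂ) • A') ^ N‖ = α ^ N * ‖A' ^ N‖ := by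
          rw [smul_pow, norm_smul, norm_pow, Complex.norm_real, Real.norm_eq_abs, abs_of_pos hα]
      _ = (α * ‖A' ^ N‖ ^ (1 / (N : ℝ))) ^ N := by rw [mul_pow, ← ht]
      _ ≤ c ^ N := pow_le_pow_left₀ (by positivity) hN.le N
  have hpow0 : ∀ i j, Tendsto (fun N : ℕ => ((α • A) ^ N) i j) atTop (𝓝 0) := by
    intro i j
    apply squeeze_zero_norm (fun N => ?_) hnormB
    have hmapN : (algebraMap ℝ ℂ).mapMatrix ((α • A) ^ N) = ((α : ℂ) • A') ^ N := by
      rw [map_pow, hsm]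
    calc ‖((α • A) ^ N) i j‖
        = ‖((algebraMap ℝ ℂ).mapMatrix ((α • A) ^ N)) i j‖ := (Complex.norm_real _).symm
      _ ≤ ‖(algebraMap ℝ ℂ).mapMatrix ((α • A) ^ N)‖ := entry_le_norm _ i j
      _ = ‖((α : ℂ) • A') ^ N‖ := by rw [hmapN]
  have hMB0 : ∀ i j, Tendsto (fun N : ℕ => (M * (α • A) ^ N) i j) atTop (𝓝 0) := by
    intro i j
    simp only [Matrix.mul_apply]
    have := tendsto_finset_sum (Finset.univ : Finset (Fin n))
      (fun k _ => ((hpow0 k j).const_mul (M i k)))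
    simpa using this
  have hpownn : ∀ (N : ℕ) (i j : Fin n), 0 ≤ ((α • A) ^ N) i j := by
    intro N
    induction N with
    | zero =>
      intro i j
      by_cases hij : i = j <;> simp [pow_zero, Matrix.one_apply, hij]
    | succ N ih =>
      intro i j
      rw [pow_succ, Matrix.mul_apply]
      refine Finset.sum_nonneg fun k _ => mul_nonneg (ih i k) ?_
      simpa [Matrix.smul_apply] using mul_nonneg hα.le (hA k j)
  have hSnn : ∀ (N : ℕ) (i j : Fin n), 0 ≤ (∑ k ∈ Finset.range N, (α • A) ^ k) i j := by
    intro N i j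
    rw [Matrix.sum_apply]
    exact Finset.sum_nonneg fun k _ => hpownn k i j
  have hsplit : ∀ (N : ℕ) (i j : Fin n),
      M i j = (∑ k ∈ Finset.range N, (α • A) ^ k) i j + (M * (α • A) ^ N) i j := by
    intro N i j
    conv_lhs => rw [key N]
    simp [Matrix.add_apply]
  have hMnn : ∀ i j, 0 ≤ M i j := by
    intro i j
    refine le_of_tendsto (hMB0 i j) (Eventually.of_forall fun N => ?_)
    have := hsplit N i j
    linarith [hSnn N i j]
  have hMdiag : ∀ i, 1 ≤ M i i := by
    intro i
    have hB : ∀ N ≥ 1, (M * (α • A) ^ N) i i ≤ M i i - 1 := by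
      intro N hN
      have hS : 1 ≤ (∑ k ∈ Finset.range N, (α • A) ^ k) i i := by
        have h0 : ((α • A) ^ 0) i i = 1 := by simp [Matrix.one_apply]
        have hs : ((α • A) ^ 0) i i ≤ ∑ k ∈ Finset.range N, ((α • A) ^ k) i i :=
          Finset.single_le_sum (f := fun k => ((α • A) ^ k) i i) (fun k _ => hpownn k i i)
            (Finset.mem_range.mpr hN)
        rw [Matrix.sum_apply]
        linarith
      have := hsplit N i i
      linarith
    have := le_of_tendsto (hMB0 i i) (eventually_atTop.mpr ⟨1, hB⟩)
    linarith
  set v : Fin n → ℝ := M *ᵥ (1 : Fin n → ℝ) with hv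
  have hvfix : ∀ i, α * (A *ᵥ v) i = v i - 1 := by
    have h1 : (1 - α • A) *ᵥ v = 1 := by
      rw [hv, Matrix.mulVec_mulVec, hMr, Matrix.one_mulVec]
    intro i
    have h2 : v i - ((α • A) *ᵥ v) i = 1 := by
      have := congrFun h1 i
      rw [Matrix.sub_mulVec, Matrix.one_mulVec] at this
      simpa using this
    have h3 : ((α • A) *ᵥ v) i = α * (A *ᵥ v) i := by
      rw [Matrix.smul_mulVec]; rfl
    rw [h3] at h2
    linarith
  have hv1 : ∀ i, 1 ≤ v i := by
    intro i
    have hvi : v i = ∑ j, M i j := by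
      simp [hv, Matrix.mulVec, dotProduct]
    have : M i i ≤ ∑ j, M i j :=
      Finset.single_le_sum (f := fun j => M i j) (fun j _ => hMnn i j) (Finset.mem_univ i)
    rw [hvi]
    linarith [hMdiag i]
  constructor
  · intro hlt
    have hne : (Finset.univ : Finset (Fin n)).Nonempty := Finset.univ_nonempty
    set ε := Finset.univ.inf' hne fun i => (vbar i - v i) / (2 * v i) with hε
    have hεpos : 0 < ε := by
      rw [hε, Finset.lt_inf'_iff]
      intro i _
      have h1 := hv1 i
      have h2 := hlt i
      apply div_pos <;> linarith
    refine ⟨fun i => (1 + ε) * v i, ?_, ?_, ?_⟩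
    · intro i
      have := hv1 i
      exact mul_pos (by linarith) (by linarith)
    · intro i
      have hAv : (A *ᵥ fun j => (1 + ε) * v j) i = (1 + ε) * (A *ᵥ v) i := by
        have hfun : (fun j => (1 + ε) * v j) = (1 + ε) • v := rfl
        rw [hfun, Matrix.mulVec_smul]
        rfl
      rw [hAv]
      have h3 : α * ((1 + ε) * (A *ᵥ v) i) = (1 + ε) * (v i - 1) := by
        rw [← hvfix i]; ring
      rw [h3]
      show 1 + (1 + ε) * (v i - 1) < (1 + ε) * v i
      linarith
    · intro i
      have hle : ε ≤ (vbar i - v i) / (2 * v i) := Finset.inf'_le _ (Finset.mem_univ i)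
      have hvi := hv1 i
      have hv0 : 0 < v i := by linarith
      have h4 : ε * v i ≤ (vbar i - v i) / 2 := by
        calc ε * v i ≤ ((vbar i - v i) / (2 * v i)) * v i :=
              mul_le_mul_of_nonneg_right hle hv0.le
          _ = (vbar i - v i) / 2 := by field_simp
      have h5 := hlt i
      show (1 + ε) * v i < vbar i
      nlinarith
  · rintro ⟨lam, hpos, hineq, hltb⟩ i
    set w : Fin n → ℝ := fun j => lam j - 1 - α * (A *ᵥ lam) j with hw
    have hwpos : ∀ j, 0 < w j := fun j => by
      have := hineq j
      simp only [hw]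
      linarith
    have hlam : lam = fun j => v j + (M *ᵥ w) j := by
      have h1 : (1 - α • A) *ᵥ lam = (1 : Fin n → ℝ) + w := by
        funext j
        rw [Matrix.sub_mulVec, Matrix.one_mulVec]
        have h2 : ((α • A) *ᵥ lam) j = α * (A *ᵥ lam) j := by
          rw [Matrix.smul_mulVec]; rfl
        simp only [Pi.sub_apply, Pi.add_apply, Pi.one_apply, h2, hw]
        ring
      have h3 : lam = M *ᵥ ((1 - α • A) *ᵥ lam) := by
        rw [Matrix.mulVec_mulVec, hMl, Matrix.one_mulVec]
      rw [h3, h1, Matrix.mulVec_add]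
      funext j
      simp [hv]
    have hMw : w i ≤ (M *ᵥ w) i := by
      have hmv : (M *ᵥ w) i = ∑ j, M i j * w j := by
        simp [Matrix.mulVec, dotProduct]
      have h5 : M i i * w i ≤ ∑ j, M i j * w j :=
        Finset.single_le_sum (f := fun j => M i j * w j)
          (fun j _ => mul_nonneg (hMnn i j) (hwpos j).le) (Finset.mem_univ i)
      have h6 : w i ≤ M i i * w i := le_mul_of_one_le_left (hwpos i).le (hMdiag i)
      rw [hmv]
      linarith
    have h7 := congrFun hlam i
    have h8 := hltb i
    have h9 := hwpos i
    linarith
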